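/- Let T : U → Y be bounded, linear, injective between Hilbert spaces, U_n ⊂ U a finite-dimensional subspace, and Y_n = T(U_n). Then the minimum-norm solution of T P_{U_n} u = y for y ∈ T(U) is (T P_{U_n})† y = T⁻¹ P_{Y_n} y, i.e. the Moore–Penrose inverse of T P_{U_n} applied to y equals T⁻¹ composed with the orthogonal projection onto Y_n. -/

import Mathlib

open scoped RealInnerProductSpace

/-- Let `T : U → Y` be bounded, linear, injective, `Uₙ ⊂ U` finite-dimensional,
`Yₙ = T(Uₙ)`.  For `y ∈ T(U)`, the minimum-norm solution of `T P_{Uₙ} u = y`,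
i.e. the Moore–Penrose inverse `(T P_{Uₙ})† y`, equals `T⁻¹ P_{Yₙ} y`: the
(unique) element `x₀ ∈ Uₙ` with `T x₀ = P_{Yₙ} y` minimizes the residual
`‖T P_{Uₙ} x − y‖` over all `x`, and has minimal norm among all minimizers. -/
theorem moore_penrose_eq_Tinv_proj
    {U Y : Type*} [NormedAddCommGroup U] [InnerProductSpace ℝ U] [CompleteSpace U]
    [NormedAddCommGroup Y] [InnerProductSpace ℝ Y] [CompleteSpace Y]
    (T : U →L[ℝ] Y) (hT : Function.Injective T)
    (Un : Submodule ℝ U) [FiniteDimensional ℝ Un] [Submodule.HasOrthogonalProjection Un]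
    (Yn : Submodule ℝ Y) (hYn : Yn = Submodule.map (T : U →ₗ[ℝ] Y) Un)
    [Submodule.HasOrthogonalProjection Yn]
    (y : Y) (hy : y ∈ LinearMap.range (T : U →ₗ[ℝ] Y))
    (x₀ : U) (hx₀ : x₀ ∈ Un) (hTx₀ : T x₀ = (Submodule.orthogonalProjectionOnto Yn y : Y)) :
    (∀ x : U, ‖T x₀ - y‖ ≤ ‖T (Submodule.orthogonalProjectionOnto Un x : U) - y‖) ∧
    (∀ x : U, ‖T (Submodule.orthogonalProjectionOnto Un x : U) - y‖ = ‖T x₀ - y‖ → ‖x₀‖ ≤ ‖x‖) := by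
  have hperp : y - (Submodule.orthogonalProjectionOnto Yn y : Y) ∈ Ynᗮ :=
    Yn.sub_starProjection_mem_orthogonal y
  set p : Y := (Submodule.orthogonalProjectionOnto Yn y : Y) with hp
  have key : ∀ z ∈ Yn, ‖z - y‖ ^ 2 = ‖z - p‖ ^ 2 + ‖p - y‖ ^ 2 := by
    intro z hz
    have h0 : ⟪z - p, y - p⟫ = 0 :=
      hperp _ (Yn.sub_mem hz (Submodule.orthogonalProjectionOnto Yn y).2)
    have h1 : ⟪z - p, p - y⟫ = 0 := by
      rw [← neg_sub y p, inner_neg_right, h0, neg_zero]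
    have : z - y = (z - p) + (p - y) := by abel
    rw [this, norm_add_sq_real, h1]
    ring
  have hmem : ∀ x : U, T (Submodule.orthogonalProjectionOnto Un x : U) ∈ Yn := by
    intro x
    rw [hYn]
    exact ⟨_, (Submodule.orthogonalProjectionOnto Un x).2, rfl⟩
  constructor
  · intro x
    have hk := key _ (hmem x)
    rw [hTx₀]
    have h2 : ‖p - y‖ ^ 2 ≤ ‖T (Submodule.orthogonalProjectionOnto Un x : U) - y‖ ^ 2 := by
      nlinarith [sq_nonneg ‖T (Submodule.orthogonalProjectionOnto Un x : U) - p‖]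
    nlinarith [norm_nonneg (p - y), norm_nonneg (T (Submodule.orthogonalProjectionOnto Un x : U) - y)]
  · intro x hx
    have hk := key _ (hmem x)
    rw [hx, hTx₀] at hk
    have hz : T (Submodule.orthogonalProjectionOnto Un x : U) = p := by
      have : ‖T (Submodule.orthogonalProjectionOnto Un x : U) - p‖ = 0 := by
        nlinarith [norm_nonneg (T (Submodule.orthogonalProjectionOnto Un x : U) - p)]
      rw [← sub_eq_zero]
      exact norm_eq_zero.mp this
    have : (Submodule.orthogonalProjectionOnto Un x : U) = x₀ := hT (by rw [hz, hTx₀])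
    rw [← this]
    calc ‖(Submodule.orthogonalProjectionOnto Un x : U)‖ ≤ ‖Submodule.orthogonalProjectionOnto Un‖ * ‖x‖ :=
          (Submodule.orthogonalProjectionOnto Un).le_opNorm x
      _ ≤ 1 * ‖x‖ := by gcongr; exact Submodule.orthogonalProjectionOnto_norm_le Un
      _ = ‖x‖ := one_mul _
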